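/- If n applications with common load p and common memory q must be scheduled on machines with capacities P ≥ p and Q ≥ q, and n mod m = 0 or Q div q > ⌈n/m⌉, then m machines suffice with maximum load p·n/m iff p·n/m ≤ P; otherwise (Q div q = ⌈n/m⌉ and n mod m > 0) m machines suffice iff p·(⌊n/m⌋ + 1/⌊m/(n mod m)⌋) ≤ P. Consequently, the minimal feasible m is monotone-decreasing-checkable and binary search over m finds the optimum. -/

import Mathlib

/-- Ceiling of `n / m` for naturals. -/
def ceilDiv' (n m : ℕ) : ℕ := n / m + (if n % m = 0 then 0 else 1)

/-- Optimal maximum machine load `P'(m)` for `n` applications of common load `p`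
and common memory `q` on `m` machines of memory capacity `Q` (so at most `Q / q`
instances per machine), as derived in the balancing analysis. -/
noncomputable def optLoad (n : ℕ) (p : ℚ) (q Q : ℕ) (m : ℕ) : ℚ :=
  if n % m = 0 ∨ ceilDiv' n m < Q / q then p * n / m
  else p * (((n / m : ℕ) : ℚ) + 1 / ((m / (n % m) : ℕ) : ℚ))

/-- Feasible assignment of the `n` common-requirement applications on `m`
machines, with every machine load at most `P`. -/
def FeasCommon (n m : ℕ) (p : ℚ) (q Q : ℕ) (P : ℚ) (x : Fin n → Fin m → ℚ) : Prop :=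
  (∀ i j, 0 ≤ x i j) ∧
  (∀ i, p ≤ ∑ j, x i j) ∧
  (∀ j, (Finset.univ.filter (fun i => x i j ≠ 0)).card ≤ Q / q) ∧
  (∀ j, ∑ i, x i j ≤ P)


namespace BSC
open Finset
open scoped Classical

variable {n m : ℕ}

def stepR (N : Fin n → Finset (Fin m)) (F : Finset (Fin n)) (j j' : Fin m) : Prop :=
  ∃ i ∈ F, j ∈ N i ∧ j' ∈ N i

def reach (N : Fin n → Finset (Fin m)) (F : Finset (Fin n)) : Fin m → Fin m → Prop :=
  Relation.ReflTransGen (stepR N F)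

noncomputable def cls (N : Fin n → Finset (Fin m)) (F : Finset (Fin n)) (j : Fin m) :
    Finset (Fin m) := univ.filter (fun j' => reach N F j j')

noncomputable def ncl (N : Fin n → Finset (Fin m)) (F : Finset (Fin n)) : ℕ :=
  (univ.image (cls N F)).card

variable {N : Fin n → Finset (Fin m)} {F : Finset (Fin n)} {i : Fin n} {j j' u : Fin m}

lemma stepR_symm (h : stepR N F j j') : stepR N F j' j := by
  obtain ⟨i, hi, h1, h2⟩ := h; exact ⟨i, hi, h2, h1⟩

lemma reach_refl : reach N F j j := Relation.ReflTransGen.refl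

lemma reach_symm (h : reach N F j j') : reach N F j' j := by
  induction h with
  | refl => exact reach_refl
  | tail _ hstep ih => exact Relation.ReflTransGen.head (stepR_symm hstep) ih

lemma reach_trans (h : reach N F j j') (h' : reach N F j' u) : reach N F j u :=
  Relation.ReflTransGen.trans h h'

lemma mem_cls : j' ∈ cls N F j ↔ reach N F j j' := by simp [cls]

lemma self_mem_cls : j ∈ cls N F j := mem_cls.2 reach_refl

lemma cls_eq_of_reach (h : reach N F j j') : cls N F j = cls N F j' := by
  ext u; simp only [mem_cls]
  exact ⟨fun hu => reach_trans (reach_symm h) hu, fun hu => reach_trans h hu⟩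

lemma reach_of_cls_eq (h : cls N F j = cls N F j') : reach N F j j' := by
  have := self_mem_cls (N := N) (F := F) (j := j')
  rw [← h, mem_cls] at this; exact this

lemma reach_mono {F' : Finset (Fin n)} (hFF : F ⊆ F') (h : reach N F j j') :
    reach N F' j j' := by
  induction h with
  | refl => exact reach_refl
  | tail _ hstep ih =>
      obtain ⟨i, hi, h1, h2⟩ := hstep
      exact Relation.ReflTransGen.tail ih ⟨i, hFF hi, h1, h2⟩

lemma reach_insert_decomp (h : reach N (insert i F) j j') :
    reach N F j j' ∨ ∃ u ∈ N i, reach N F j u := by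
  induction h with
  | refl => exact Or.inl reach_refl
  | tail _ hstep ih =>
      obtain ⟨i', hi', h1, h2⟩ := hstep
      rcases Finset.mem_insert.1 hi' with rfl | hi'F
      · rcases ih with hr | hr
        · exact Or.inr ⟨_, h1, hr⟩
        · exact Or.inr hr
      · rcases ih with hr | hr
        · exact Or.inl (Relation.ReflTransGen.tail hr ⟨i', hi'F, h1, h2⟩)
        · exact Or.inr hr

lemma ncl_insert : ncl N F ≤ ncl N (insert i F) + ((N i).card - 1) := by
  rcases (N i).eq_empty_or_nonempty with hNi | ⟨u₀, hu₀⟩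
  · -- reach unchanged
    have hstep : ∀ a b, stepR N (insert i F) a b ↔ stepR N F a b := by
      intro a b
      constructor
      · rintro ⟨i', hi', h1, h2⟩
        rcases Finset.mem_insert.1 hi' with rfl | hi'F
        · rw [hNi] at h1; exact absurd h1 (Finset.notMem_empty _)
        · exact ⟨i', hi'F, h1, h2⟩
      · rintro ⟨i', hi', h1, h2⟩; exact ⟨i', Finset.mem_insert_of_mem hi', h1, h2⟩
    have : cls N (insert i F) = cls N F := by
      funext j; ext j'
      have : reach N (insert i F) = reach N F := by
        have : stepR N (insert i F) = stepR N F := by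
          funext a b; exact propext (hstep a b)
        rw [reach, this, reach]
      simp [mem_cls, this]
    simp [ncl, this]
  · -- nonempty case
    set F' := insert i F with hF'
    set Old := (univ : Finset (Fin m)).image (cls N F) with hOld
    set New := (univ : Finset (Fin m)).image (cls N F') with hNew
    set D₀ := cls N F' u₀ with hD₀
    have hD₀New : D₀ ∈ New := Finset.mem_image_of_mem _ (mem_univ u₀)
    set oldA := Old.filter (fun K => ¬ ∃ u ∈ N i, u ∈ K) with hoA
    set oldB := Old.filter (fun K => ∃ u ∈ N i, u ∈ K) with hoB
    have hsplit : Old.card = oldB.card + oldA.card := by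
      rw [hoA, hoB]
      exact (Finset.card_filter_add_card_filter_not (s := Old)
        (p := fun K => ∃ u ∈ N i, u ∈ K)).symm
    -- oldB ≤ card N i
    have hB : oldB.card ≤ (N i).card := by
      apply Finset.card_le_card_of_injOn
        (fun K => if h : ∃ u ∈ N i, u ∈ K then h.choose else u₀)
      · intro K hK
        rw [hoB, Finset.mem_coe, Finset.mem_filter] at hK
        dsimp only
        rw [dif_pos hK.2]
        exact hK.2.choose_spec.1
      · intro K hK K' hK' heq
        simp only [Finset.mem_coe, hoB, Finset.mem_filter] at hK hK'
        simp only [dif_pos hK.2, dif_pos hK'.2] at heq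
        have h1 : hK.2.choose ∈ K := hK.2.choose_spec.2
        have h2 : hK'.2.choose ∈ K' := hK'.2.choose_spec.2
        rw [← heq] at h2
        -- K and K' are classes sharing an element
        obtain ⟨j1, _, rfl⟩ := Finset.mem_image.1 hK.1
        obtain ⟨j2, _, rfl⟩ := Finset.mem_image.1 hK'.1
        have r1 : reach N F j1 hK.2.choose := mem_cls.1 h1
        have r2 : reach N F j2 hK.2.choose := mem_cls.1 h2
        rw [cls_eq_of_reach r1, cls_eq_of_reach r2]
    -- oldA ≤ New.card - 1 via injection into New.erase D₀
    have hA : oldA.card ≤ (New.erase D₀).card := by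
      apply Finset.card_le_card_of_injOn
        (fun K => if h : ∃ j : Fin m, cls N F j = K then cls N F' h.choose else ∅)
      · intro K hK
        rw [hoA, Finset.mem_coe, Finset.mem_filter] at hK
        obtain ⟨jK, _, hjK⟩ := Finset.mem_image.1 hK.1
        have hex : ∃ j : Fin m, cls N F j = K := ⟨jK, hjK⟩
        dsimp only
        rw [dif_pos hex]
        apply Finset.mem_erase.2
        constructor
        · -- cls N F' (choose) ≠ D₀
          intro hcon
          have : reach N F' hex.choose u₀ := by
            rw [hD₀] at hcon
            exact reach_of_cls_eq hcon
          rcases reach_insert_decomp this with hr | ⟨u, hu, hr⟩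
          · have : u₀ ∈ cls N F hex.choose := mem_cls.2 hr
            rw [hex.choose_spec] at this
            exact hK.2 ⟨u₀, hu₀, this⟩
          · have : u ∈ cls N F hex.choose := mem_cls.2 hr
            rw [hex.choose_spec] at this
            exact hK.2 ⟨u, hu, this⟩
        · exact Finset.mem_image_of_mem _ (mem_univ _)
      · intro K hK K' hK' heq
        simp only [Finset.mem_coe, hoA, Finset.mem_filter] at hK hK'
        obtain ⟨jK, _, hjK⟩ := Finset.mem_image.1 hK.1
        obtain ⟨jK', _, hjK'⟩ := Finset.mem_image.1 hK'.1
        have hex : ∃ j : Fin m, cls N F j = K := ⟨jK, hjK⟩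
        have hex' : ∃ j : Fin m, cls N F j = K' := ⟨jK', hjK'⟩
        simp only [dif_pos hex, dif_pos hex'] at heq
        have : reach N F' hex.choose hex'.choose := reach_of_cls_eq heq
        rcases reach_insert_decomp this with hr | ⟨u, hu, hr⟩
        · rw [← hex.choose_spec, ← hex'.choose_spec]
          exact cls_eq_of_reach hr
        · have : u ∈ cls N F hex.choose := mem_cls.2 hr
          rw [hex.choose_spec] at this
          exact absurd (⟨u, hu, this⟩ : ∃ u ∈ N i, u ∈ K) hK.2
    have hNi1 : 1 ≤ (N i).card := Finset.card_pos.2 ⟨u₀, hu₀⟩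
    have herase : (New.erase D₀).card = New.card - 1 := Finset.card_erase_of_mem hD₀New
    have hNew1 : 1 ≤ New.card := Finset.card_pos.2 ⟨D₀, hD₀New⟩
    rw [ncl, ncl, ← hOld, ← hNew]
    omega

lemma ncl_empty : ncl N (∅ : Finset (Fin n)) = m := by
  have : ∀ j : Fin m, cls N ∅ j = {j} := by
    intro j; ext j'
    simp only [mem_cls, Finset.mem_singleton]
    constructor
    · intro h
      induction h with
      | refl => rfl
      | tail _ hstep ih => obtain ⟨i, hi, _, _⟩ := hstep; exact absurd hi (Finset.notMem_empty _)
    · rintro rfl; exact reach_refl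
  rw [ncl]
  have : (univ : Finset (Fin m)).image (cls N ∅) = univ.image (fun j => ({j} : Finset (Fin m))) := by
    apply Finset.image_congr; intro j _; exact this j
  rw [this, Finset.card_image_of_injective _ (fun a b h => Finset.singleton_injective h)]
  simp

lemma ncl_main (N : Fin n → Finset (Fin m)) (F : Finset (Fin n)) :
    m ≤ ncl N F + ∑ i ∈ F, ((N i).card - 1) := by
  induction F using Finset.induction_on with
  | empty => simp [ncl_empty]
  | @insert i F hiF ih =>
      rw [Finset.sum_insert hiF]
      have := ncl_insert (N := N) (F := F) (i := i)
      omega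

variable {n m : ℕ}

lemma mem_class_iff {N : Fin n → Finset (Fin m)} {F : Finset (Fin n)} {j j₀ : Fin m} :
    j ∈ cls N F j₀ ↔ cls N F j = cls N F j₀ := by
  constructor
  · intro h; exact (cls_eq_of_reach (mem_cls.1 h)).symm
  · intro h; exact mem_cls.2 (reach_symm (reach_of_cls_eq h))

lemma reach_stuck {N : Fin n → Finset (Fin m)} {F : Finset (Fin n)} {j j' : Fin m}
    (h : reach N F j j') (hstuck : ∀ i ∈ F, j ∉ N i) : j' = j := by
  induction h with
  | refl => rfl
  | tail hreach hstep ih =>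
      subst ih
      obtain ⟨i, hi, h1, _⟩ := hstep
      exact absurd h1 (hstuck i hi)

theorem lower3 (a r g : ℕ) (p P : ℚ) (x : Fin n → Fin m → ℚ)
    (hp : 0 < p) (hr : 0 < r) (hrm : r ≤ m) (hn : n = a * m + r) (hg : g = m / r)
    (hnonneg : ∀ i j, 0 ≤ x i j) (hrow : ∀ i, p ≤ ∑ j, x i j)
    (hcount : ∀ j, (univ.filter (fun i => x i j ≠ 0)).card ≤ a + 1)
    (hload : ∀ j, ∑ i, x i j ≤ P) :
    p * ((a : ℚ) + 1 / (g : ℚ)) ≤ P := by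
  set N : Fin n → Finset (Fin m) := fun i => univ.filter (fun j => x i j ≠ 0) with hN
  have hmemN : ∀ i j, j ∈ N i ↔ x i j ≠ 0 := by intro i j; simp [hN]
  have hNne : ∀ i, (N i).Nonempty := by
    intro i
    by_contra hcon
    rw [Finset.not_nonempty_iff_eq_empty] at hcon
    have hz : ∀ j, x i j = 0 := by
      intro j
      by_contra hj
      have : j ∈ N i := (hmemN i j).2 hj
      simp [hcon] at this
    have := hrow i
    rw [Finset.sum_congr rfl (fun j _ => hz j)] at this
    simp at this
    exact absurd this (not_le.2 hp)
  have hmpos : 0 < m := lt_of_lt_of_le hr hrm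
  set pick : Fin n → Fin m := fun i => (hNne i).choose with hpick
  have hpickmem : ∀ i, pick i ∈ N i := fun i => (hNne i).choose_spec
  set φ : Fin n → Finset (Fin m) := fun i => cls N univ (pick i) with hφ
  set T := (univ : Finset (Fin m)).image (cls N univ) with hT
  have hφT : ∀ i, φ i ∈ T := fun i => Finset.mem_image_of_mem _ (mem_univ _)
  have hf1 : ∀ i : Fin n, ∀ j ∈ N i, cls N univ j = φ i := by
    intro i j hj
    have : reach N univ (pick i) j :=
      Relation.ReflTransGen.single ⟨i, mem_univ i, hpickmem i, hj⟩
    exact (cls_eq_of_reach this).symm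
  have hTne : ∀ D ∈ T, ∃ j₀ : Fin m, D = cls N univ j₀ := by
    intro D hD
    obtain ⟨j₀, _, h⟩ := Finset.mem_image.1 hD
    exact ⟨j₀, h.symm⟩
  set fib : Finset (Fin m) → Finset (Fin n) := fun D => univ.filter (fun i => φ i = D) with hfib
  have hnsum : n = ∑ D ∈ T, (fib D).card := by
    have := Finset.card_eq_sum_card_fiberwise (s := (univ : Finset (Fin n))) (t := T)
      (f := φ) (fun i _ => hφT i)
    simpa using this
  have hmsum : m = ∑ D ∈ T, D.card := by
    have h1 := Finset.card_eq_sum_card_fiberwise (s := (univ : Finset (Fin m))) (t := T)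
      (f := cls N univ) (fun j _ => Finset.mem_image_of_mem _ (mem_univ j))
    simp only [Finset.card_univ, Fintype.card_fin] at h1
    refine h1.trans (Finset.sum_congr rfl ?_)
    intro D hD
    congr 1
    obtain ⟨j₀, rfl⟩ := hTne D hD
    ext j
    simp only [Finset.mem_filter, mem_univ, true_and]
    exact mem_class_iff.symm
  have hf2 : ∀ (D : Finset (Fin m)), ∀ i : Fin n, i ∈ fib D → N i ⊆ D := by
    intro D i hi
    simp only [hfib, Finset.mem_filter] at hi
    intro j hj
    rw [← hi.2, ← hf1 i j hj]
    exact self_mem_cls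
  have hf2' : ∀ (D : Finset (Fin m)), D ∈ T → ∀ i : Fin n, ∀ j ∈ N i, j ∈ D → i ∈ fib D := by
    intro D hDT i j hjNi hjD
    obtain ⟨j₀, rfl⟩ := hTne D hDT
    simp only [hfib, Finset.mem_filter, mem_univ, true_and]
    rw [← hf1 i j hjNi]
    exact mem_class_iff.1 hjD
  have hkey : ∀ D ∈ T, (fib D).card ≤ a * D.card + 1 := by
    intro D hDT
    obtain ⟨j₀, hDj₀⟩ := hTne D hDT
    have hj₀D : j₀ ∈ D := by rw [hDj₀]; exact self_mem_cls
    have hDm : D.card ≤ m := by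
      have := Finset.card_le_card (Finset.subset_univ D)
      simpa using this
    have hclsD : ∀ j ∈ D, cls N univ j = D := by
      intro j hjD
      rw [hDj₀] at hjD ⊢
      exact mem_class_iff.1 hjD
    have hclsin : ∀ j ∈ D, cls N (fib D) j = D := by
      intro j hjD
      have hinD : ∀ j'', reach N univ j j'' → j'' ∈ D ∧ reach N (fib D) j j'' := by
        intro j'' h
        induction h with
        | refl => exact ⟨hjD, reach_refl⟩
        | tail hreach hstep ih =>
            obtain ⟨i, _, h1, h2⟩ := hstep
            have hiF : i ∈ fib D := hf2' D hDT i _ h1 ih.1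
            have hcD : _ ∈ D := hf2 D i hiF h2
            exact ⟨hcD, Relation.ReflTransGen.tail ih.2 ⟨i, hiF, h1, h2⟩⟩
      apply Finset.Subset.antisymm
      · intro j' hj'
        have : reach N univ j j' := reach_mono (Finset.subset_univ _) (mem_cls.1 hj')
        rw [← hclsD j hjD]
        exact mem_cls.2 this
      · intro j' hj'D
        have hru : reach N univ j j' :=
          reach_of_cls_eq ((hclsD j hjD).trans (hclsD j' hj'D).symm)
        exact mem_cls.2 (hinD j' hru).2
    have hclsout : ∀ j : Fin m, j ∉ D → cls N (fib D) j = {j} := by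
      intro j hjD
      ext j'
      simp only [mem_cls, Finset.mem_singleton]
      constructor
      · intro h
        exact reach_stuck h (fun i hiF hjN => hjD (hf2 D i hiF hjN))
      · rintro rfl; exact reach_refl
    have hncl : ncl N (fib D) = m - D.card + 1 := by
      have himg : (univ : Finset (Fin m)).image (cls N (fib D)) =
          insert D ((univ \ D).image (fun j => ({j} : Finset (Fin m)))) := by
        ext K
        simp only [Finset.mem_image, Finset.mem_insert, Finset.mem_sdiff, mem_univ, true_and]
        constructor
        · rintro ⟨j, rfl⟩
          by_cases hj : j ∈ D
          · exact Or.inl (hclsin j hj)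
          · exact Or.inr ⟨j, hj, (hclsout j hj).symm⟩
        · rintro (rfl | ⟨j, hj, rfl⟩)
          · exact ⟨j₀, hclsin j₀ hj₀D⟩
          · exact ⟨j, hclsout j hj⟩
      rw [ncl, himg, Finset.card_insert_of_notMem, Finset.card_image_of_injective _
        (fun a b h => Finset.singleton_injective h)]
      · rw [Finset.card_sdiff, Finset.inter_univ]
        simp
      · intro hcon
        obtain ⟨j, hj, hDj⟩ := Finset.mem_image.1 hcon
        rw [Finset.mem_sdiff] at hj
        rw [← hDj] at hj
        exact hj.2 (Finset.mem_singleton_self j)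
    have hmain := ncl_main N (fib D)
    rw [hncl] at hmain
    have hcard1 : ∀ i, 1 ≤ (N i).card := fun i => Finset.card_pos.2 (hNne i)
    have hsum_eq : ∑ i ∈ fib D, (N i).card
        = (∑ i ∈ fib D, ((N i).card - 1)) + (fib D).card := by
      rw [Finset.card_eq_sum_ones (fib D), ← Finset.sum_add_distrib]
      apply Finset.sum_congr rfl
      intro i _
      have := hcard1 i
      omega
    have hedge : ∑ i ∈ fib D, (N i).card ≤ (a + 1) * D.card := by
      have hNi_eq : ∀ i ∈ fib D, (N i).card = ∑ j ∈ D, (if x i j ≠ 0 then 1 else 0) := by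
        intro i hi
        have : N i = D.filter (fun j => x i j ≠ 0) := by
          ext j
          simp only [Finset.mem_filter]
          constructor
          · intro hj; exact ⟨hf2 D i hi hj, (hmemN i j).1 hj⟩
          · intro hj; exact (hmemN i j).2 hj.2
        rw [this, Finset.card_filter]
      rw [Finset.sum_congr rfl hNi_eq, Finset.sum_comm]
      have hcol : ∀ j ∈ D, ∑ i ∈ fib D, (if x i j ≠ 0 then 1 else 0) ≤ a + 1 := by
        intro j _
        rw [← Finset.card_filter]
        calc ((fib D).filter (fun i => x i j ≠ 0)).card
            ≤ ((univ : Finset (Fin n)).filter (fun i => x i j ≠ 0)).card :=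
              Finset.card_le_card (Finset.filter_subset_filter _ (Finset.subset_univ _))
          _ ≤ a + 1 := hcount j
      calc ∑ j ∈ D, ∑ i ∈ fib D, (if x i j ≠ 0 then 1 else 0)
          ≤ ∑ j ∈ D, (a + 1) := Finset.sum_le_sum hcol
        _ = (a + 1) * D.card := by rw [Finset.sum_const, smul_eq_mul, mul_comm]
    have hDpos : 1 ≤ D.card := Finset.card_pos.2 ⟨j₀, hj₀D⟩
    have hprod : (a + 1) * D.card = a * D.card + D.card := by ring
    omega
  -- globally: at least r full classes
  set full := T.filter (fun D => (fib D).card = a * D.card + 1) with hfull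
  have hfullcard : r ≤ full.card := by
    have hb : ∀ D ∈ T, (fib D).card ≤ a * D.card + (if D ∈ full then 1 else 0) := by
      intro D hDT
      by_cases hDf : D ∈ full
      · rw [if_pos hDf]; exact hkey D hDT
      · rw [if_neg hDf]
        simp only [hfull, Finset.mem_filter] at hDf
        have h1 := hkey D hDT
        have h2 : ¬ ((fib D).card = a * D.card + 1) := fun hc => hDf ⟨hDT, hc⟩
        omega
    have hle := Finset.sum_le_sum hb
    have heq2 : ∑ D ∈ T, (a * D.card + (if D ∈ full then 1 else 0)) = a * m + full.card := by
      rw [Finset.sum_add_distrib, ← Finset.mul_sum, ← hmsum]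
      congr 1
      rw [Finset.sum_ite_mem]
      have : T ∩ full = full := Finset.inter_eq_right.2 (Finset.filter_subset _ _)
      rw [this, Finset.sum_const, smul_eq_mul, mul_one]
    rw [heq2, ← hnsum] at hle
    omega
  have hfullne : full.Nonempty := Finset.card_pos.1 (lt_of_lt_of_le hr hfullcard)
  obtain ⟨Dm, hDmf, hDmin⟩ := Finset.exists_min_image full (fun D => D.card) hfullne
  have hDmT : Dm ∈ T := (Finset.mem_filter.1 hDmf).1
  have hDmfull : (fib Dm).card = a * Dm.card + 1 := (Finset.mem_filter.1 hDmf).2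
  have hDmpos : 1 ≤ Dm.card := by
    obtain ⟨j₀, rfl⟩ := hTne Dm hDmT
    exact Finset.card_pos.2 ⟨j₀, self_mem_cls⟩
  have hrg : Dm.card ≤ g := by
    have h1 : r * Dm.card ≤ ∑ D ∈ full, D.card := by
      calc r * Dm.card ≤ full.card * Dm.card := Nat.mul_le_mul_right _ hfullcard
        _ = ∑ _D ∈ full, Dm.card := by rw [Finset.sum_const, smul_eq_mul]
        _ ≤ ∑ D ∈ full, D.card := Finset.sum_le_sum (fun D hD => hDmin D hD)
    have h2 : ∑ D ∈ full, D.card ≤ m := by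
      calc ∑ D ∈ full, D.card ≤ ∑ D ∈ T, D.card :=
            Finset.sum_le_sum_of_subset (Finset.filter_subset _ _)
        _ = m := hmsum.symm
    rw [hg]
    refine (Nat.le_div_iff_mul_le hr).2 ?_
    have hcm : Dm.card * r = r * Dm.card := Nat.mul_comm _ _
    omega
  have hloadD : p * (((fib Dm).card : ℚ)) ≤ (Dm.card : ℚ) * P := by
    calc p * (((fib Dm).card : ℚ)) = ∑ _i ∈ fib Dm, p := by
          rw [Finset.sum_const, nsmul_eq_mul, mul_comm]
      _ ≤ ∑ i ∈ fib Dm, ∑ j, x i j := Finset.sum_le_sum (fun i _ => hrow i)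
      _ = ∑ i ∈ fib Dm, ∑ j ∈ Dm, x i j := by
          apply Finset.sum_congr rfl
          intro i hi
          symm
          apply Finset.sum_subset (Finset.subset_univ Dm)
          intro j _ hjD
          by_contra hne
          exact hjD (hf2 Dm i hi ((hmemN i j).2 hne))
      _ = ∑ j ∈ Dm, ∑ i ∈ fib Dm, x i j := Finset.sum_comm
      _ ≤ ∑ j ∈ Dm, ∑ i, x i j := Finset.sum_le_sum (fun j _ =>
          Finset.sum_le_sum_of_subset_of_nonneg (Finset.subset_univ _)
            (fun i _ _ => hnonneg i j))
      _ ≤ ∑ _j ∈ Dm, P := Finset.sum_le_sum (fun j _ => hload j)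
      _ = (Dm.card : ℚ) * P := by rw [Finset.sum_const, nsmul_eq_mul]
  rw [hDmfull] at hloadD
  push_cast at hloadD
  have hc0 : (0:ℚ) < (Dm.card:ℚ) := by exact_mod_cast hDmpos
  have hg1 : 1 ≤ g := by
    rw [hg]
    exact (Nat.one_le_div_iff hr).2 hrm
  have hg0 : (0:ℚ) < (g:ℚ) := by exact_mod_cast hg1
  have hcg : (Dm.card : ℚ) ≤ (g : ℚ) := by exact_mod_cast hrg
  have h1c : 1/(g:ℚ) ≤ 1/(Dm.card:ℚ) := one_div_le_one_div_of_le hc0 hcg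
  have hstep1 : p * ((a : ℚ) + 1 / (g : ℚ)) ≤ p * ((a : ℚ) + 1 / (Dm.card : ℚ)) :=
    mul_le_mul_of_nonneg_left (by linarith) hp.le
  have hstep2 : p * ((a : ℚ) + 1 / (Dm.card : ℚ)) ≤ P := by
    rw [← mul_le_mul_iff_of_pos_right hc0]
    have hcc : (1/(Dm.card:ℚ)) * (Dm.card:ℚ) = 1 := one_div_mul_cancel (ne_of_gt hc0)
    have hid : p * ((a:ℚ) + 1/(Dm.card:ℚ)) * (Dm.card:ℚ)
        = p * ((a:ℚ) * (Dm.card:ℚ) + 1) := by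
      rw [mul_assoc, add_mul, hcc]
    rw [hid]
    calc p * ((a:ℚ) * (Dm.card:ℚ) + 1) ≤ (Dm.card:ℚ) * P := hloadD
      _ = P * (Dm.card:ℚ) := mul_comm _ _
  linarith


/-- Block construction: `a` whole apps per machine plus `r` shared apps split
into `g` parts over disjoint groups of `g` machines. -/
theorem constr1 (n m a r g : ℕ) (p : ℚ) (hp : 0 < p) (hm : 0 < m)
    (hn : n = a * m + r) (hg : 0 < g) (hrg : r * g ≤ m) :
    ∃ x : Fin n → Fin m → ℚ, (∀ i j, 0 ≤ x i j) ∧ (∀ i, ∑ j, x i j = p) ∧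
      (∀ j, ((Finset.univ : Finset (Fin n)).filter (fun i => x i j ≠ 0)).card
          ≤ a + (if r = 0 then 0 else 1)) ∧
      (∀ j, ∑ i, x i j ≤ p * a + (if r = 0 then 0 else p / g)) := by
  have hgq : (0:ℚ) < (g:ℚ) := by exact_mod_cast hg
  set f : ℕ → ℕ → ℚ := fun u v =>
    if u < a * m then (if u / a = v then p else 0)
    else (if (u - a * m) * g ≤ v ∧ v < (u - a * m) * g + g then p / g else 0) with hf
  have hfnonneg : ∀ u v, 0 ≤ f u v := by
    intro u v
    rw [hf]
    dsimp only
    split_ifs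
    · exact hp.le
    · exact le_rfl
    · positivity
    · exact le_rfl
  refine ⟨fun i j => f i.val j.val, fun i j => hfnonneg _ _, ?_, ?_, ?_⟩
  · -- row sums
    intro i
    rw [Fin.sum_univ_eq_sum_range (fun v => f i.val v) m]
    by_cases hi : i.val < a * m
    · have ha : 0 < a := by
        rcases Nat.eq_zero_or_pos a with rfl | h
        · simp at hi
        · exact h
      have hiam : i.val / a < m := (Nat.div_lt_iff_lt_mul ha).2 (by rwa [mul_comm] at hi)
      have hcong : ∀ v ∈ Finset.range m, f i.val v = if i.val / a = v then p else 0 := by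
        intro v _
        rw [hf]
        dsimp only
        rw [if_pos hi]
      rw [Finset.sum_congr rfl hcong, Finset.sum_ite_eq (Finset.range m) (i.val / a)]
      rw [if_pos (Finset.mem_range.2 hiam)]
    · -- shared app
      have hiub : i.val < a * m + r := by rw [← hn]; exact i.isLt
      have htr : i.val - a * m < r := by omega
      have htg : (i.val - a * m) * g + g ≤ m := by
        calc (i.val - a * m) * g + g = ((i.val - a * m) + 1) * g := by ring
          _ ≤ r * g := Nat.mul_le_mul_right g (by omega)
          _ ≤ m := hrg
      have hcong : ∀ v ∈ Finset.range m, f i.val v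
          = if v ∈ Finset.Ico ((i.val - a * m) * g) ((i.val - a * m) * g + g)
            then p / g else 0 := by
        intro v _
        rw [hf]
        dsimp only
        rw [if_neg hi]
        simp only [Finset.mem_Ico]
      rw [Finset.sum_congr rfl hcong, Finset.sum_ite_mem]
      have hsub : Finset.Ico ((i.val - a * m) * g) ((i.val - a * m) * g + g)
          ⊆ Finset.range m := by
        intro v hv
        rw [Finset.mem_Ico] at hv
        exact Finset.mem_range.2 (lt_of_lt_of_le hv.2 htg)
      rw [Finset.inter_eq_right.2 hsub, Finset.sum_const, Nat.card_Ico, nsmul_eq_mul]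
      have h2 : ((i.val - a * m) * g + g - (i.val - a * m) * g) = g := by omega
      rw [h2]
      field_simp
  · -- counts
    intro j
    show ((Finset.univ : Finset (Fin n)).filter (fun i => f i.val j.val ≠ 0)).card
        ≤ a + (if r = 0 then 0 else 1)
    rw [← Finset.card_image_of_injective _ (Fin.val_injective (n := n))]
    have hmem : ∀ i : Fin n, f i.val j.val ≠ 0 →
        (i.val < a * m ∧ i.val ∈ Finset.Ico (j.val * a) (j.val * a + a))
        ∨ (a * m ≤ i.val ∧ i.val = a * m + j.val / g) := by
      intro i hne
      rw [hf] at hne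
      dsimp only at hne
      by_cases hi : i.val < a * m
      · rw [if_pos hi] at hne
        left
        refine ⟨hi, ?_⟩
        have ha : 0 < a := by
          rcases Nat.eq_zero_or_pos a with rfl | h
          · simp at hi
          · exact h
        have hcond : i.val / a = j.val := by
          by_contra hc
          rw [if_neg hc] at hne
          exact hne rfl
        rw [Finset.mem_Ico]
        constructor
        · calc j.val * a = i.val / a * a := by rw [hcond]
            _ ≤ i.val := Nat.div_mul_le_self _ _
        · calc i.val < i.val / a * a + a := Nat.lt_div_mul_add ha
            _ = j.val * a + a := by rw [hcond]
      · rw [if_neg hi] at hne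
        right
        refine ⟨not_lt.1 hi, ?_⟩
        have hcond : (i.val - a * m) * g ≤ j.val ∧ j.val < (i.val - a * m) * g + g := by
          by_contra hc
          rw [if_neg hc] at hne
          exact hne rfl
        have : j.val / g = i.val - a * m := by
          apply Nat.div_eq_of_lt_le hcond.1
          calc j.val < (i.val - a * m) * g + g := hcond.2
            _ = ((i.val - a * m) + 1) * g := by ring
        omega
    have hsub : ((Finset.univ : Finset (Fin n)).filter (fun i => f i.val j.val ≠ 0)).image Fin.val
        ⊆ Finset.Ico (j.val * a) (j.val * a + a) ∪ {a * m + j.val / g} := by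
      intro u hu
      obtain ⟨i, hi, rfl⟩ := Finset.mem_image.1 hu
      rw [Finset.mem_filter] at hi
      rcases hmem i hi.2 with ⟨_, h⟩ | ⟨_, h⟩
      · exact Finset.mem_union_left _ h
      · exact Finset.mem_union_right _ (Finset.mem_singleton.2 h)
    rcases Nat.eq_zero_or_pos r with hr0 | hrpos
    · rw [if_pos hr0]
      have hsub2 : ((Finset.univ : Finset (Fin n)).filter (fun i => f i.val j.val ≠ 0)).image Fin.val
          ⊆ Finset.Ico (j.val * a) (j.val * a + a) := by
        intro u hu
        obtain ⟨i, hi, rfl⟩ := Finset.mem_image.1 hu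
        rw [Finset.mem_filter] at hi
        rcases hmem i hi.2 with ⟨_, h⟩ | ⟨hge, _⟩
        · exact h
        · exfalso
          have : i.val < a * m + r := by rw [← hn]; exact i.isLt
          omega
      have := Finset.card_le_card hsub2
      rw [Nat.card_Ico] at this
      omega
    · rw [if_neg (by omega)]
      have hc1 := Finset.card_le_card hsub
      have hc2 : (Finset.Ico (j.val * a) (j.val * a + a) ∪ {a * m + j.val / g}).card
          ≤ a + 1 := by
        calc (Finset.Ico (j.val * a) (j.val * a + a) ∪ {a * m + j.val / g}).card
            ≤ (Finset.Ico (j.val * a) (j.val * a + a)).card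
              + ({a * m + j.val / g} : Finset ℕ).card := Finset.card_union_le _ _
          _ = a + 1 := by rw [Nat.card_Ico, Finset.card_singleton]; omega
      omega
  · -- loads
    intro j
    rw [Fin.sum_univ_eq_sum_range (fun u => f u j.val) n]
    have hsplit : Finset.range n = Finset.Ico 0 (a * m) ∪ Finset.Ico (a * m) n := by
      rw [Finset.range_eq_Ico, Finset.Ico_union_Ico_eq_Ico (Nat.zero_le _) (by omega)]
    rw [hsplit, Finset.sum_union (Finset.Ico_disjoint_Ico_consecutive _ _ _)]
    have hb1 : ∑ u ∈ Finset.Ico 0 (a * m), f u j.val ≤ p * a := by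
      have hpt : ∀ u ∈ Finset.Ico 0 (a * m), f u j.val
          ≤ if u ∈ Finset.Ico (j.val * a) (j.val * a + a) then p else 0 := by
        intro u hu
        rw [Finset.mem_Ico] at hu
        rw [hf]
        dsimp only
        rw [if_pos hu.2]
        have ha : 0 < a := by
          rcases Nat.eq_zero_or_pos a with rfl | h
          · omega
          · exact h
        by_cases hc : u / a = j.val
        · have hub : u ∈ Finset.Ico (j.val * a) (j.val * a + a) := by
            rw [Finset.mem_Ico]
            constructor
            · calc j.val * a = u / a * a := by rw [hc]
                _ ≤ u := Nat.div_mul_le_self _ _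
            · calc u < u / a * a + a := Nat.lt_div_mul_add ha
                _ = j.val * a + a := by rw [hc]
          rw [if_pos hc, if_pos hub]
        · rw [if_neg hc]
          split_ifs
          · exact hp.le
          · exact le_rfl
      calc ∑ u ∈ Finset.Ico 0 (a * m), f u j.val
          ≤ ∑ u ∈ Finset.Ico 0 (a * m),
              (if u ∈ Finset.Ico (j.val * a) (j.val * a + a) then p else 0) :=
            Finset.sum_le_sum hpt
        _ = ∑ _u ∈ Finset.Ico 0 (a * m) ∩ Finset.Ico (j.val * a) (j.val * a + a), p := by
            rw [Finset.sum_ite_mem]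
        _ ≤ p * a := by
            rw [Finset.sum_const, nsmul_eq_mul]
            have hcle : (Finset.Ico 0 (a * m) ∩ Finset.Ico (j.val * a) (j.val * a + a)).card
                ≤ a := by
              calc (Finset.Ico 0 (a * m) ∩ Finset.Ico (j.val * a) (j.val * a + a)).card
                  ≤ (Finset.Ico (j.val * a) (j.val * a + a)).card :=
                    Finset.card_le_card Finset.inter_subset_right
                _ = a := by rw [Nat.card_Ico]; omega
            calc ((Finset.Ico 0 (a * m) ∩ Finset.Ico (j.val * a) (j.val * a + a)).card : ℚ) * p
                ≤ (a : ℚ) * p := by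
                  apply mul_le_mul_of_nonneg_right _ hp.le
                  exact_mod_cast hcle
              _ = p * a := mul_comm _ _
    have hb2 : ∑ u ∈ Finset.Ico (a * m) n, f u j.val ≤ (if r = 0 then 0 else p / g) := by
      rcases Nat.eq_zero_or_pos r with hr0 | hrpos
      · rw [if_pos hr0]
        have : Finset.Ico (a * m) n = ∅ := by
          rw [Finset.Ico_eq_empty_iff]
          omega
        rw [this, Finset.sum_empty]
      · rw [if_neg (by omega)]
        have hpt : ∀ u ∈ Finset.Ico (a * m) n, f u j.val
            ≤ if u = a * m + j.val / g then p / g else 0 := by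
          intro u hu
          rw [Finset.mem_Ico] at hu
          rw [hf]
          dsimp only
          rw [if_neg (by omega)]
          by_cases hc : (u - a * m) * g ≤ j.val ∧ j.val < (u - a * m) * g + g
          · have : j.val / g = u - a * m := by
              apply Nat.div_eq_of_lt_le hc.1
              calc j.val < (u - a * m) * g + g := hc.2
                _ = ((u - a * m) + 1) * g := by ring
            rw [if_pos hc, if_pos (by omega)]
          · rw [if_neg hc]
            split_ifs
            · positivity
            · exact le_rfl
        calc ∑ u ∈ Finset.Ico (a * m) n, f u j.val
            ≤ ∑ u ∈ Finset.Ico (a * m) n, (if u = a * m + j.val / g then p / g else 0) :=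
              Finset.sum_le_sum hpt
          _ ≤ p / g := by
              rw [Finset.sum_ite_eq' (Finset.Ico (a * m) n) (a * m + j.val / g)]
              split_ifs
              · exact le_rfl
              · positivity
    linarith

lemma clamp_diff (a b c d : ℚ) (hab : a ≤ b) (hcd : c ≤ d) :
    max a (min b d) - max a (min b c) = max c (min d b) - max c (min d a) := by
  simp only [max_def, min_def]
  split_ifs <;> linarith

lemma ceil_cast_div (n m : ℕ) (hm : 0 < m) : Nat.ceil ((n:ℚ)/(m:ℚ)) = ceilDiv' n m := by
  have hmq : (0:ℚ) < (m:ℚ) := by exact_mod_cast hm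
  have hdm : m * (n / m) + n % m = n := Nat.div_add_mod n m
  rcases Nat.eq_zero_or_pos (n % m) with hr0 | hrpos
  · rw [ceilDiv', if_pos hr0]
    have hnd : n = (n / m) * m := by
      have : (n/m) * m = m * (n/m) := Nat.mul_comm _ _
      omega
    have : (n:ℚ)/(m:ℚ) = ((n/m : ℕ) : ℚ) := by
      rw [div_eq_iff (ne_of_gt hmq)]
      exact_mod_cast hnd
    rw [this, Nat.ceil_natCast]
    omega
  · rw [ceilDiv', if_neg (by omega)]
    rw [Nat.ceil_eq_iff (n := n/m + 1) (Nat.succ_ne_zero _)]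
    constructor
    · have h1 : (n/m) * m < n := by
        have : (n/m) * m = m * (n/m) := Nat.mul_comm _ _
        omega
      have : ((n/m : ℕ):ℚ) * m < n := by exact_mod_cast h1
      have h2 : ((n/m : ℕ):ℚ) < (n:ℚ)/(m:ℚ) := by
        rw [lt_div_iff₀ hmq]
        exact this
      calc ((n/m + 1 - 1 : ℕ) : ℚ) = ((n/m : ℕ) : ℚ) := by norm_num
        _ < (n:ℚ)/(m:ℚ) := h2
    · have h1 : n ≤ (n/m + 1) * m := by
        have : (n/m + 1) * m = m * (n/m) + m := by ring
        have h2 : n % m < m := Nat.mod_lt _ hm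
        omega
      rw [div_le_iff₀ hmq]
      exact_mod_cast h1
  
lemma ceilDiv'_le_iff {n m k : ℕ} (hm : 0 < m) : ceilDiv' n m ≤ k ↔ n ≤ k * m := by
  have hdm : m * (n / m) + n % m = n := Nat.div_add_mod n m
  have hmod : n % m < m := Nat.mod_lt _ hm
  rcases Nat.eq_zero_or_pos (n % m) with hr0 | hrpos
  · rw [ceilDiv', if_pos hr0]
    constructor
    · intro h
      calc n = m * (n/m) := by omega
        _ ≤ m * k := Nat.mul_le_mul_left m (by omega)
        _ = k * m := Nat.mul_comm _ _
    · intro h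
      by_contra hc
      push_neg at hc
      have : k * m < (n/m) * m := (Nat.mul_lt_mul_right hm).2 (by omega)
      have h2 : (n/m) * m = m * (n/m) := Nat.mul_comm _ _
      omega
  · rw [ceilDiv', if_neg (by omega)]
    constructor
    · intro h
      calc n = m * (n/m) + n % m := hdm.symm
        _ ≤ m * (n/m) + m := by omega
        _ = m * (n/m + 1) := by ring
        _ ≤ m * k := Nat.mul_le_mul_left m (by omega)
        _ = k * m := Nat.mul_comm _ _
    · intro h
      by_contra hc
      push_neg at hc
      have hkd : k ≤ n / m := by omega
      have : k * m ≤ (n/m) * m := Nat.mul_le_mul_right m hkd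
      have h2 : (n/m) * m = m * (n/m) := Nat.mul_comm _ _
      omega

/-- Wrap-around (McNaughton) construction. -/
theorem constr2 (n m : ℕ) (p : ℚ) (hp : 0 < p) (hm : 0 < m) (hn : 0 < n) :
    ∃ x : Fin n → Fin m → ℚ, (∀ i j, 0 ≤ x i j) ∧ (∀ i, ∑ j, x i j = p) ∧
      (∀ j, ((Finset.univ : Finset (Fin n)).filter (fun i => x i j ≠ 0)).card
          ≤ ceilDiv' n m + 1) ∧
      (∀ j, ∑ i, x i j ≤ p * n / m) := by
  have hmq : (0:ℚ) < (m:ℚ) := by exact_mod_cast hm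
  set L : ℚ := (n:ℚ)/(m:ℚ) with hL
  have hL0 : 0 ≤ L := by positivity
  have hmL : (m:ℚ) * L = (n:ℚ) := by
    rw [hL, mul_div_cancel₀ _ (ne_of_gt hmq)]
  set ov : ℕ → ℕ → ℚ := fun u v =>
    max (u:ℚ) (min ((u:ℚ)+1) (((v:ℚ)+1)*L)) - max (u:ℚ) (min ((u:ℚ)+1) ((v:ℚ)*L)) with hov
  have hov0 : ∀ u v, 0 ≤ ov u v := by
    intro u v
    rw [hov]
    dsimp only
    have h1 : (v:ℚ)*L ≤ ((v:ℚ)+1)*L := by nlinarith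
    have : min ((u:ℚ)+1) ((v:ℚ)*L) ≤ min ((u:ℚ)+1) (((v:ℚ)+1)*L) :=
      min_le_min le_rfl h1
    have := max_le_max (le_refl (u:ℚ)) this
    linarith
  refine ⟨fun i j => p * ov i.val j.val, fun i j => mul_nonneg hp.le (hov0 _ _), ?_, ?_, ?_⟩
  · -- row sums
    intro i
    rw [Fin.sum_univ_eq_sum_range (fun v => p * ov i.val v) m, ← Finset.mul_sum]
    have htel : ∑ v ∈ Finset.range m, ov i.val v
        = (fun v : ℕ => max (i.val:ℚ) (min ((i.val:ℚ)+1) ((v:ℚ)*L))) m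
          - (fun v : ℕ => max (i.val:ℚ) (min ((i.val:ℚ)+1) ((v:ℚ)*L))) 0 := by
      rw [← Finset.sum_range_sub (fun v : ℕ => max (i.val:ℚ) (min ((i.val:ℚ)+1) ((v:ℚ)*L))) m]
      apply Finset.sum_congr rfl
      intro v _
      rw [hov]
      dsimp only
      push_cast
      ring_nf
    rw [htel]
    dsimp only
    have hi1 : (i.val:ℚ) + 1 ≤ (m:ℚ)*L := by
      rw [hmL]
      have : i.val < n := i.isLt
      exact_mod_cast this
    have e1 : max (i.val:ℚ) (min ((i.val:ℚ)+1) ((m:ℚ)*L)) = (i.val:ℚ)+1 := by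
      rw [min_eq_left hi1, max_eq_right (by linarith)]
    have e2 : max (i.val:ℚ) (min ((i.val:ℚ)+1) ((0:ℚ)*L)) = (i.val:ℚ) := by
      rw [zero_mul, min_eq_right (by positivity), max_eq_left (by positivity)]
    push_cast
    rw [e1, e2]
    ring
  · -- counts
    intro j
    show ((Finset.univ : Finset (Fin n)).filter (fun i => p * ov i.val j.val ≠ 0)).card
        ≤ ceilDiv' n m + 1
    rw [← Finset.card_image_of_injective _ (Fin.val_injective (n := n))]
    set k0 := Nat.floor ((j.val:ℚ)*L) with hk0
    have hsub : ((Finset.univ : Finset (Fin n)).filter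
        (fun i => p * ov i.val j.val ≠ 0)).image Fin.val
        ⊆ Finset.Icc k0 (k0 + Nat.ceil L) := by
      intro u hu
      obtain ⟨i, hi, rfl⟩ := Finset.mem_image.1 hu
      rw [Finset.mem_filter] at hi
      have hovne : ov i.val j.val ≠ 0 := by
        intro hc
        exact hi.2 (by rw [hc, mul_zero])
      have hjL : (0:ℚ) ≤ (j.val:ℚ)*L := by positivity
      -- nonzero overlap forces jL < i+1 and i < (j+1)L
      have hlow : (j.val:ℚ)*L < (i.val:ℚ) + 1 := by
        by_contra hc
        push_neg at hc
        apply hovne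
        rw [hov]
        dsimp only
        have hj1 : (i.val:ℚ) + 1 ≤ ((j.val:ℚ)+1)*L := by nlinarith
        rw [min_eq_left hc, min_eq_left hj1]
        ring
      have hhigh : (i.val:ℚ) < ((j.val:ℚ)+1)*L := by
        by_contra hc
        push_neg at hc
        apply hovne
        rw [hov]
        dsimp only
        have h1 : min ((i.val:ℚ)+1) (((j.val:ℚ)+1)*L) = ((j.val:ℚ)+1)*L :=
          min_eq_right (by linarith)
        have h2 : min ((i.val:ℚ)+1) ((j.val:ℚ)*L) = (j.val:ℚ)*L := by
          apply min_eq_right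
          nlinarith
        rw [h1, h2, max_eq_left hc, max_eq_left (by nlinarith)]
        ring
      rw [Finset.mem_Icc]
      constructor
      · -- k0 ≤ i
        have h1 : (k0:ℚ) ≤ (j.val:ℚ)*L := Nat.floor_le hjL
        have : (k0:ℚ) < (i.val:ℚ) + 1 := lt_of_le_of_lt h1 hlow
        have : k0 < i.val + 1 := by exact_mod_cast this
        omega
      · have h1 : (j.val:ℚ)*L < (k0:ℚ) + 1 := Nat.lt_floor_add_one _
        have h2 : L ≤ (Nat.ceil L : ℚ) := Nat.le_ceil L
        have : (i.val:ℚ) < ((k0 + Nat.ceil L : ℕ):ℚ) + 1 := by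
          push_cast
          nlinarith
        have : i.val < (k0 + Nat.ceil L) + 1 := by exact_mod_cast this
        omega
    calc (((Finset.univ : Finset (Fin n)).filter
            (fun i => p * ov i.val j.val ≠ 0)).image Fin.val).card
        ≤ (Finset.Icc k0 (k0 + Nat.ceil L)).card := Finset.card_le_card hsub
      _ = Nat.ceil L + 1 := by rw [Nat.card_Icc]; omega
      _ = ceilDiv' n m + 1 := by rw [ceil_cast_div n m hm]
  · -- column sums
    intro j
    rw [Fin.sum_univ_eq_sum_range (fun u => p * ov u j.val) n, ← Finset.mul_sum]
    have hswap : ∀ u ∈ Finset.range n, ov u j.val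
        = (fun u : ℕ => max ((j.val:ℚ)*L) (min (((j.val:ℚ)+1)*L) (u:ℚ))) (u+1)
          - (fun u : ℕ => max ((j.val:ℚ)*L) (min (((j.val:ℚ)+1)*L) (u:ℚ))) u := by
      intro u _
      rw [hov]
      dsimp only
      have h1 : (u:ℚ) ≤ (u:ℚ) + 1 := by linarith
      have h2 : (j.val:ℚ)*L ≤ ((j.val:ℚ)+1)*L := by nlinarith
      have := clamp_diff (u:ℚ) ((u:ℚ)+1) ((j.val:ℚ)*L) (((j.val:ℚ)+1)*L) h1 h2
      rw [this]
      push_cast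
      ring_nf
    rw [Finset.sum_congr rfl hswap,
      Finset.sum_range_sub (fun u : ℕ => max ((j.val:ℚ)*L) (min (((j.val:ℚ)+1)*L) (u:ℚ))) n]
    have hj1 : ((j.val:ℚ)+1)*L ≤ (n:ℚ) := by
      rw [← hmL]
      have : (j.val:ℚ) + 1 ≤ (m:ℚ) := by
        have : j.val < m := j.isLt
        exact_mod_cast this
      nlinarith
    have e1 : max ((j.val:ℚ)*L) (min (((j.val:ℚ)+1)*L) ((n:ℚ))) = ((j.val:ℚ)+1)*L := by
      rw [min_eq_left hj1]
      apply max_eq_right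
      nlinarith
    have e2 : max ((j.val:ℚ)*L) (min (((j.val:ℚ)+1)*L) ((0:ℚ))) = (j.val:ℚ)*L := by
      rw [min_eq_right (by positivity), max_eq_left (by positivity)]
    push_cast
    rw [e1, e2]
    have : ((j.val:ℚ)+1)*L - (j.val:ℚ)*L = L := by ring
    rw [this, hL]
    rw [mul_div_assoc]

lemma avgLB (n m : ℕ) (p P : ℚ) (x : Fin n → Fin m → ℚ) (hm : 0 < m)
    (hrow : ∀ i, p ≤ ∑ j, x i j) (hload : ∀ j, ∑ i, x i j ≤ P) :
    p * n / m ≤ P := by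
  have hmq : (0:ℚ) < (m:ℚ) := by exact_mod_cast hm
  have h1 : (n:ℚ) * p ≤ (m:ℚ) * P := by
    calc (n:ℚ) * p = ∑ _i : Fin n, p := by
          rw [Finset.sum_const, Finset.card_univ, Fintype.card_fin, nsmul_eq_mul]
      _ ≤ ∑ i : Fin n, ∑ j : Fin m, x i j := Finset.sum_le_sum (fun i _ => hrow i)
      _ = ∑ j : Fin m, ∑ i : Fin n, x i j := Finset.sum_comm
      _ ≤ ∑ _j : Fin m, P := Finset.sum_le_sum (fun j _ => hload j)
      _ = (m:ℚ) * P := by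
          rw [Finset.sum_const, Finset.card_univ, Fintype.card_fin, nsmul_eq_mul]
  rw [div_le_iff₀ hmq]
  linarith

lemma optLoad_nonneg (n : ℕ) (p : ℚ) (q Q m : ℕ) (hp : 0 < p) :
    0 ≤ optLoad n p q Q m := by
  rw [optLoad]
  split_ifs
  · positivity
  · positivity

lemma extend_feas (n m₁ m₂ : ℕ) (p : ℚ) (q Q : ℕ) (P : ℚ) (h12 : m₁ ≤ m₂) (hP : 0 ≤ P)
    (x : Fin n → Fin m₁ → ℚ) (hx : FeasCommon n m₁ p q Q P x) :
    ∃ y : Fin n → Fin m₂ → ℚ, FeasCommon n m₂ p q Q P y := by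
  obtain ⟨hnn, hrow, hcnt, hld⟩ := hx
  set f : Fin n → ℕ → ℚ := fun i v => if h : v < m₁ then x i ⟨v, h⟩ else 0 with hf
  have hsum : ∀ i, ∑ j : Fin m₂, f i j.val = ∑ j : Fin m₁, x i j := by
    intro i
    rw [Fin.sum_univ_eq_sum_range (fun v => f i v) m₂, Finset.range_eq_Ico,
      ← Finset.sum_Ico_consecutive _ (Nat.zero_le m₁) h12]
    have h2 : ∑ v ∈ Finset.Ico m₁ m₂, f i v = 0 := by
      apply Finset.sum_eq_zero
      intro v hv
      rw [Finset.mem_Ico] at hv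
      rw [hf]
      dsimp only
      rw [dif_neg (by omega)]
    rw [h2, add_zero, ← Finset.range_eq_Ico, ← Fin.sum_univ_eq_sum_range (fun v => f i v) m₁]
    apply Finset.sum_congr rfl
    intro j _
    rw [hf]
    dsimp only
    rw [dif_pos j.isLt]
  refine ⟨fun i j => f i j.val, fun i j => ?_, fun i => ?_, fun j => ?_, fun j => ?_⟩
  · rw [hf]
    dsimp only
    split_ifs
    · exact hnn _ _
    · exact le_rfl
  · rw [hsum i]; exact hrow i
  · by_cases hj : j.val < m₁
    · have : (Finset.univ.filter (fun i : Fin n => f i j.val ≠ 0))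
          = Finset.univ.filter (fun i : Fin n => x i ⟨j.val, hj⟩ ≠ 0) := by
        apply Finset.filter_congr
        intro i _
        rw [hf]
        dsimp only
        rw [dif_pos hj]
    -- mild abuse: show via this
      calc (Finset.univ.filter (fun i : Fin n => f i j.val ≠ 0)).card
          = (Finset.univ.filter (fun i : Fin n => x i ⟨j.val, hj⟩ ≠ 0)).card := by rw [this]
        _ ≤ Q / q := hcnt _
    · have : (Finset.univ.filter (fun i : Fin n => f i j.val ≠ 0)) = ∅ := by
        apply Finset.filter_false_of_mem
        intro i _
        rw [hf]
        dsimp only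
        rw [dif_neg hj]
        exact fun h => h rfl
      rw [this, Finset.card_empty]
      exact Nat.zero_le _
  · by_cases hj : j.val < m₁
    · have : ∑ i, f i j.val = ∑ i, x i ⟨j.val, hj⟩ := by
        apply Finset.sum_congr rfl
        intro i _
        rw [hf]
        dsimp only
        rw [dif_pos hj]
      rw [this]
      exact hld _
    · have : ∑ i : Fin n, f i j.val = 0 := by
        apply Finset.sum_eq_zero
        intro i _
        rw [hf]
        dsimp only
        rw [dif_neg hj]
      rw [this]
      exact hP

theorem feas_iff (n : ℕ) (p : ℚ) (q Q : ℕ) (P : ℚ) (hn : 0 < n) (hp : 0 < p)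
    (m : ℕ) (hm : 0 < m) (hQle : ceilDiv' n m ≤ Q / q) :
    (∃ x : Fin n → Fin m → ℚ, FeasCommon n m p q Q P x) ↔ optLoad n p q Q m ≤ P := by
  have hdm : m * (n / m) + n % m = n := Nat.div_add_mod n m
  have hdm' : (n/m) * m = m * (n/m) := Nat.mul_comm _ _
  by_cases hcase : n % m = 0 ∨ ceilDiv' n m < Q / q
  · rw [optLoad, if_pos hcase]
    constructor
    · rintro ⟨x, hnn, hrow, hcnt, hld⟩
      exact avgLB n m p P x hm hrow hld
    · intro hP
      rcases Nat.eq_zero_or_pos (n % m) with hr0 | hrpos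
      · obtain ⟨x, h1, h2, h3, h4⟩ := constr1 n m (n/m) 0 1 p hp hm (by omega)
          one_pos (by omega)
        refine ⟨x, h1, fun i => (h2 i).ge, fun j => ?_, fun j => ?_⟩
        · have hcl := h3 j
          rw [if_pos rfl] at hcl
          have hce : ceilDiv' n m = n/m + 0 := by rw [ceilDiv', if_pos hr0]
          omega
        · have hcl := h4 j
          rw [if_pos rfl, add_zero] at hcl
          have hnm : ((n:ℚ)) = ((n/m : ℕ):ℚ) * (m:ℚ) := by
            exact_mod_cast (by omega : n = (n/m) * m)
          have hmq : (0:ℚ) < (m:ℚ) := by exact_mod_cast hm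
          calc ∑ i, x i j ≤ p * ((n/m : ℕ):ℚ) := hcl
            _ = p * (n:ℚ) / (m:ℚ) := by
                rw [hnm, ← mul_assoc, mul_div_assoc, div_self (ne_of_gt hmq), mul_one]
            _ ≤ P := hP
      · have hlt : ceilDiv' n m < Q / q := by
          rcases hcase with h | h
          · omega
          · exact h
        obtain ⟨x, h1, h2, h3, h4⟩ := constr2 n m p hp hm hn
        exact ⟨x, h1, fun i => (h2 i).ge, fun j => le_trans (h3 j) (by omega),
          fun j => le_trans (h4 j) hP⟩
  · rw [optLoad, if_neg hcase]
    push_neg at hcase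
    obtain ⟨hr, hge⟩ := hcase
    have hQq : Q / q = n/m + 1 := by
      rw [ceilDiv', if_neg hr] at hQle hge
      omega
    have hrm : n % m < m := Nat.mod_lt _ hm
    have hrpos : 0 < n % m := Nat.pos_of_ne_zero hr
    have hneq : n = (n/m) * m + (n%m) := by omega
    constructor
    · rintro ⟨x, hnn, hrow, hcnt, hld⟩
      exact lower3 (n/m) (n%m) (m/(n%m)) p P x hp hrpos hrm.le hneq rfl hnn hrow
        (fun j => by rw [← hQq]; exact hcnt j) hld
    · intro hP
      have hgpos : 0 < m / (n%m) := Nat.div_pos hrm.le hrpos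
      have hrg : (n%m) * (m/(n%m)) ≤ m := by
        calc (n%m) * (m/(n%m)) = (m/(n%m)) * (n%m) := Nat.mul_comm _ _
          _ ≤ m := Nat.div_mul_le_self _ _
      obtain ⟨x, h1, h2, h3, h4⟩ := constr1 n m (n/m) (n%m) (m/(n%m)) p hp hm hneq hgpos hrg
      refine ⟨x, h1, fun i => (h2 i).ge, fun j => ?_, fun j => ?_⟩
      · have hcl := h3 j
        rw [if_neg hr] at hcl
        omega
      · have hcl := h4 j
        rw [if_neg hr] at hcl
        calc ∑ i, x i j ≤ p * ((n/m : ℕ):ℚ) + p / ((m/(n%m) : ℕ):ℚ) := hcl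
          _ = p * (((n / m : ℕ) : ℚ) + 1 / ((m / (n % m) : ℕ) : ℚ)) := by ring
          _ ≤ P := hP

end BSC

/-- `m` machines suffice iff `P'(m) ≤ P`, and `P'` is non-increasing in `m`;
hence binary search over the number of machines is correct. -/
theorem binary_search_correct (n : ℕ) (p : ℚ) (q Q : ℕ) (P : ℚ)
    (hn : 0 < n) (hp : 0 < p) (hq : 0 < q) (hqQ : q ≤ Q) :
    (∀ m : ℕ, 0 < m → ceilDiv' n m ≤ Q / q →
      ((∃ x : Fin n → Fin m → ℚ, FeasCommon n m p q Q P x) ↔ optLoad n p q Q m ≤ P)) ∧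
    (∀ m₁ m₂ : ℕ, 0 < m₁ → m₁ ≤ m₂ → ceilDiv' n m₁ ≤ Q / q →
      optLoad n p q Q m₂ ≤ optLoad n p q Q m₁) := by
  constructor
  · intro m hm hQ
    exact BSC.feas_iff n p q Q P hn hp m hm hQ
  · intro m₁ m₂ hm1 h12 hQ1
    have hm2 : 0 < m₂ := lt_of_lt_of_le hm1 h12
    have hk : n ≤ (ceilDiv' n m₁) * m₁ := (BSC.ceilDiv'_le_iff hm1).1 le_rfl
    have hQ2 : ceilDiv' n m₂ ≤ Q / q := by
      refine le_trans ?_ hQ1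
      exact (BSC.ceilDiv'_le_iff hm2).2
        (le_trans hk (Nat.mul_le_mul_left _ h12))
    obtain ⟨x, hx⟩ := (BSC.feas_iff n p q Q (optLoad n p q Q m₁) hn hp m₁ hm1 hQ1).2 le_rfl
    obtain ⟨y, hy⟩ := BSC.extend_feas n m₁ m₂ p q Q (optLoad n p q Q m₁) h12
      (BSC.optLoad_nonneg n p q Q m₁ hp) x hx
    exact (BSC.feas_iff n p q Q (optLoad n p q Q m₁) hn hp m₂ hm2 hQ2).1 ⟨y, hy⟩
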